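/- Let H be a class of Boolean functions with VC dimension d, and let T be a finite set with |T| ≥ Kd, where K > 1 satisfies K ln 2 > 1 + ln K. Then for sufficiently small constant ε > 0, the number of labellings ℓ : T → {0,1} that agree with some h ∈ H on all but at most ε|T| points of T is at most (e|T|/d)^d · (e/ε)^{ε|T|}, and hence a uniformly random labelling of T is ε-far (in normalized Hamming distance on T) from every h ∈ H with probability at least 1 − e^{−Ld} for some constant L > 0. -/

import Mathlib

def Shatters {X : Type*} (H : Set (X → Bool)) (T : Finset X) : Prop :=
  ∀ ℓ : X → Bool, ∃ h ∈ H, ∀ x ∈ T, h x = ℓ x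

section Helpers

open Finset

/-- Binomial tail bound: `∑_{k≤d} C(m,k) ≤ (e m / d)^d`. -/
private lemma sum_choose_le_pow (m d : ℕ) (hd : 0 < d) (hdm : d ≤ m) :
    ((∑ k ∈ Finset.Iic d, m.choose k : ℕ) : ℝ) ≤ (Real.exp 1 * m / d) ^ d := by
  have hm : 0 < m := lt_of_lt_of_le hd hdm
  have hm' : (0:ℝ) < m := by exact_mod_cast hm
  have hd' : (0:ℝ) < d := by exact_mod_cast hd
  set x : ℝ := (d : ℝ) / m with hx
  have hx0 : 0 < x := by positivity
  have hx1 : x ≤ 1 := by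
    rw [hx, div_le_one hm']; exact_mod_cast hdm
  have key : ((∑ k ∈ Finset.Iic d, m.choose k : ℕ) : ℝ) * x ^ d ≤ Real.exp d := by
    push_cast
    rw [Finset.sum_mul]
    calc ∑ k ∈ Finset.Iic d, (m.choose k : ℝ) * x ^ d
        ≤ ∑ k ∈ Finset.Iic d, (m.choose k : ℝ) * x ^ k := by
          refine Finset.sum_le_sum fun k hk => ?_
          have : x ^ d ≤ x ^ k :=
            pow_le_pow_of_le_one hx0.le hx1 (Finset.mem_Iic.1 hk)
          exact mul_le_mul_of_nonneg_left this (by positivity)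
      _ ≤ ∑ k ∈ Finset.range (m+1), (m.choose k : ℝ) * x ^ k := by
          refine Finset.sum_le_sum_of_subset_of_nonneg ?_ (fun k _ _ => by positivity)
          intro k hk
          rw [Finset.mem_range]
          exact lt_of_le_of_lt (le_trans (Finset.mem_Iic.1 hk) hdm) (Nat.lt_succ_self m)
      _ = (x + 1) ^ m := by
          rw [add_pow]
          refine Finset.sum_congr rfl fun k _ => ?_
          rw [one_pow]; ring
      _ ≤ Real.exp x ^ m := by
          refine pow_le_pow_left₀ (by positivity) (Real.add_one_le_exp x) m
      _ = Real.exp (x * m) := by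
          rw [mul_comm, Real.exp_nat_mul]
      _ = Real.exp d := by
          rw [hx]; congr 1; field_simp
  have hxd : (0:ℝ) < x ^ d := by positivity
  rw [← le_div_iff₀ hxd] at key
  refine key.trans (le_of_eq ?_)
  rw [hx]
  rw [mul_div_assoc, mul_pow, div_pow, ← Real.exp_one_rpow (d:ℝ),
    ← Real.rpow_natCast (Real.exp 1) d, div_div_eq_mul_div, div_eq_mul_inv, div_eq_mul_inv]
  ring_nf

/-- Hamming ball bound: `∑_{k ≤ ⌊εm⌋} C(m,k) ≤ (e/ε)^{εm}`. -/
private lemma sum_choose_le_rpow (m : ℕ) (ε : ℝ) (hε : 0 < ε) (hε1 : ε ≤ 1) :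
    ((∑ k ∈ Finset.Iic (Nat.floor (ε * m)), m.choose k : ℕ) : ℝ) ≤
      (Real.exp 1 / ε) ^ (ε * m) := by
  set j := Nat.floor (ε * m) with hj
  have hεm0 : 0 ≤ ε * m := by positivity
  have hjle : (j : ℝ) ≤ ε * m := Nat.floor_le hεm0
  have hjm : j ≤ m := by
    have h1 : ε * m ≤ (m : ℝ) := by
      nlinarith [Nat.cast_nonneg (α := ℝ) m]
    have h2 : (j : ℝ) ≤ (m : ℝ) := le_trans hjle h1
    exact_mod_cast h2
  have key : ((∑ k ∈ Finset.Iic j, m.choose k : ℕ) : ℝ) * ε ^ (ε * m) ≤ Real.exp (ε * m) := by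
    push_cast
    rw [Finset.sum_mul]
    calc ∑ k ∈ Finset.Iic j, (m.choose k : ℝ) * ε ^ (ε * m)
        ≤ ∑ k ∈ Finset.Iic j, (m.choose k : ℝ) * ε ^ k := by
          refine Finset.sum_le_sum fun k hk => ?_
          have h1 : ε ^ (ε * m) ≤ ε ^ (k : ℝ) := by
            refine Real.rpow_le_rpow_of_exponent_ge hε hε1 ?_
            exact le_trans (by exact_mod_cast Finset.mem_Iic.1 hk) hjle
          rw [← Real.rpow_natCast ε k]
          exact mul_le_mul_of_nonneg_left h1 (by positivity)
      _ ≤ ∑ k ∈ Finset.range (m+1), (m.choose k : ℝ) * ε ^ k := by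
          refine Finset.sum_le_sum_of_subset_of_nonneg ?_ (fun k _ _ => by positivity)
          intro k hk
          rw [Finset.mem_range]
          exact lt_of_le_of_lt (le_trans (Finset.mem_Iic.1 hk) hjm) (Nat.lt_succ_self m)
      _ = (ε + 1) ^ m := by
          rw [add_pow]
          refine Finset.sum_congr rfl fun k _ => ?_
          rw [one_pow]; ring
      _ ≤ Real.exp ε ^ m := pow_le_pow_left₀ (by positivity) (Real.add_one_le_exp ε) m
      _ = Real.exp (ε * m) := by rw [mul_comm, Real.exp_nat_mul]
  have hεp : (0:ℝ) < ε ^ (ε * m) := Real.rpow_pos_of_pos hε _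
  rw [← le_div_iff₀ hεp] at key
  refine key.trans (le_of_eq ?_)
  rw [Real.div_rpow (by positivity) hε.le, Real.exp_one_rpow]

/-- Monotonicity of `x ↦ x(1 - log x)` on `(0,1]`. -/
private lemma phi_mono {a b : ℝ} (ha : 0 < a) (hab : a ≤ b) (hb : b ≤ 1) :
    a * (1 - Real.log a) ≤ b * (1 - Real.log b) := by
  have hb0 : 0 < b := lt_of_lt_of_le ha hab
  have h1 : Real.log (b / a) ≤ b / a - 1 := Real.log_le_sub_one_of_pos (by positivity)
  have h2 : a * Real.log (b / a) ≤ b - a := by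
    have := mul_le_mul_of_nonneg_left h1 ha.le
    have hba : a * (b / a) = b := by field_simp
    nlinarith
  have h3 : Real.log b ≤ 0 := Real.log_nonpos hb0.le hb
  have h4 : Real.log (b / a) = Real.log b - Real.log a := Real.log_div hb0.ne' ha.ne'
  nlinarith [mul_nonneg (sub_nonneg.2 hab) (neg_nonneg.2 h3)]

/-- `ε(1 - log ε) ≤ 3√ε` for `0 < ε`. -/
private lemma eps_bound {ε : ℝ} (hε : 0 < ε) :
    ε * (1 - Real.log ε) ≤ 3 * Real.sqrt ε := by
  set s := Real.sqrt ε with hs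
  have hs0 : 0 < s := Real.sqrt_pos.2 hε
  have hs2 : s * s = ε := Real.mul_self_sqrt hε.le
  have hlog : Real.log ε = 2 * Real.log s := by
    rw [← hs2, Real.log_mul hs0.ne' hs0.ne']; ring
  have hls : -Real.log s ≤ 1 / s - 1 := by
    have := Real.log_le_sub_one_of_pos (show (0:ℝ) < 1/s by positivity)
    rwa [Real.log_div one_ne_zero hs0.ne', Real.log_one, zero_sub] at this
  have key : ε * (1 - Real.log ε) = s * s - 2 * s * s * Real.log s := by
    rw [hlog, ← hs2]; ring
  have h8 : 2 * s * s * (1 / s - 1) = 2 * s - 2 * (s * s) := by field_simp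
  have h9 : 2 * s * s * (-Real.log s) ≤ 2 * s - 2 * (s * s) := by
    rw [← h8]
    exact mul_le_mul_of_nonneg_left hls (by positivity)
  rw [key]
  nlinarith [hs0.le, mul_nonneg hs0.le hs0.le]

private lemma bool_aux {b c1 c2 : Bool} (h : (b = c1) ↔ (b = c2)) : c1 = c2 := by
  cases b <;> cases c1 <;> cases c2 <;> simp_all

/-- The counting lemma: the number of labellings of `T` within Hamming distance `j`
of some member of `H` is at most (Sauer bound) × (ball size). -/
private lemma count_le (X : Type) (H : Set (X → Bool)) (d : ℕ)
    (hVC : ∀ T' : Finset X, Shatters H T' → T'.card ≤ d)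
    (T : Finset X) (j : ℕ) :
    (Set.ncard {ℓ : ↥T → Bool | ∃ h ∈ H,
        (T.attach.filter (fun x => h x.1 ≠ ℓ x)).card ≤ j}) ≤
      (∑ k ∈ Finset.Iic d, T.card.choose k) * (∑ k ∈ Finset.Iic j, T.card.choose k) := by
  classical
  set S := {ℓ : ↥T → Bool | ∃ h ∈ H, (T.attach.filter (fun x => h x.1 ≠ ℓ x)).card ≤ j} with hS
  have hfin : S.Finite := Set.toFinite S
  rw [Set.ncard_eq_toFinset_card S hfin]
  set 𝒜 : Finset (Finset ↥T) :=
    Finset.univ.filter (fun A => ∃ h ∈ H, A = Finset.univ.filter (fun x : ↥T => h x.1 = true))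
    with h𝒜
  have hvc : 𝒜.vcDim ≤ d := by
    refine Finset.sup_le fun s hs => ?_
    rw [Finset.mem_shatterer] at hs
    have hshat : Shatters H (s.image Subtype.val) := by
      intro ℓ
      obtain ⟨A, hA, hsA⟩ := hs (Finset.filter_subset (fun x => ℓ x.1 = true) s)
      rw [h𝒜, Finset.mem_filter] at hA
      obtain ⟨-, h, hH, rfl⟩ := hA
      refine ⟨h, hH, ?_⟩
      intro x hx
      rw [Finset.mem_image] at hx
      obtain ⟨y, hy, rfl⟩ := hx
      have h1 : y ∈ s ∩ Finset.univ.filter (fun x : ↥T => h x.1 = true) ↔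
          y ∈ s.filter (fun x => ℓ x.1 = true) := by rw [hsA]
      simp only [Finset.mem_inter, Finset.mem_filter, Finset.mem_univ, true_and, hy,
        and_true, true_and] at h1
      exact Bool.eq_iff_iff.2 h1
    calc s.card = (s.image Subtype.val).card :=
          (Finset.card_image_of_injective s Subtype.val_injective).symm
      _ ≤ d := hVC _ hshat
  have hAcard : 𝒜.card ≤ ∑ k ∈ Finset.Iic d, T.card.choose k := by
    refine (Finset.card_le_card_shatterer 𝒜).trans
      ((Finset.card_shatterer_le_sum_vcDim).trans ?_)
    rw [Fintype.card_coe]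
    exact Finset.sum_le_sum_of_subset (Finset.Iic_subset_Iic.2 hvc)
  set 𝒟 : Finset (Finset ↥T) :=
    (Finset.Iic j).biUnion (fun i => Finset.powersetCard i (Finset.univ : Finset ↥T)) with h𝒟
  have hDcard : 𝒟.card = ∑ k ∈ Finset.Iic j, T.card.choose k := by
    rw [h𝒟, Finset.card_biUnion
      (fun i _ i' _ hne => Finset.pairwise_disjoint_powersetCard _ hne)]
    refine Finset.sum_congr rfl fun i _ => ?_
    rw [Finset.card_powersetCard, Finset.card_univ, Fintype.card_coe]
  set F : (↥T → Bool) → (Finset ↥T × Finset ↥T) := fun ℓ =>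
    if hl : ∃ h ∈ H, (T.attach.filter (fun x => h x.1 ≠ ℓ x)).card ≤ j then
      (Finset.univ.filter (fun x : ↥T => hl.choose x.1 = true),
       Finset.univ.filter (fun x : ↥T => hl.choose x.1 ≠ ℓ x))
    else (∅, ∅) with hF
  have hmaps : ∀ ℓ ∈ hfin.toFinset, F ℓ ∈ 𝒜 ×ˢ 𝒟 := by
    intro ℓ hℓ
    rw [Set.Finite.mem_toFinset, hS, Set.mem_setOf_eq] at hℓ
    rw [hF]
    simp only [dif_pos hℓ]
    obtain ⟨hH, hcard⟩ := hℓ.choose_spec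
    rw [Finset.mem_product]
    constructor
    · rw [h𝒜, Finset.mem_filter]
      exact ⟨Finset.mem_univ _, hℓ.choose, hH, rfl⟩
    · rw [h𝒟, Finset.mem_biUnion]
      refine ⟨(Finset.univ.filter (fun x : ↥T => hℓ.choose x.1 ≠ ℓ x)).card, ?_, ?_⟩
      · rw [Finset.mem_Iic, Finset.univ_eq_attach]
        exact hcard
      · rw [Finset.mem_powersetCard]
        exact ⟨Finset.subset_univ _, rfl⟩
  have hinj : Set.InjOn F hfin.toFinset := by
    intro ℓ1 hℓ1 ℓ2 hℓ2 heq
    rw [Finset.mem_coe, Set.Finite.mem_toFinset, hS, Set.mem_setOf_eq] at hℓ1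
    rw [Finset.mem_coe, Set.Finite.mem_toFinset, hS, Set.mem_setOf_eq] at hℓ2
    rw [hF] at heq
    simp only [dif_pos hℓ1, dif_pos hℓ2, Prod.mk.injEq] at heq
    obtain ⟨hA12, hD12⟩ := heq
    set h1 := hℓ1.choose
    set h2 := hℓ2.choose
    have hh : ∀ x : ↥T, h1 x.1 = h2 x.1 := by
      intro x
      have := Finset.ext_iff.1 hA12 x
      simp only [Finset.mem_filter, Finset.mem_univ, true_and] at this
      exact Bool.eq_iff_iff.2 this
    funext x
    have hD := Finset.ext_iff.1 hD12 x
    simp only [Finset.mem_filter, Finset.mem_univ, true_and] at hD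
    rw [hh x] at hD
    exact bool_aux (not_iff_not.1 hD)
  calc hfin.toFinset.card ≤ (𝒜 ×ˢ 𝒟).card := Finset.card_le_card_of_injOn F hmaps hinj
    _ = 𝒜.card * 𝒟.card := Finset.card_product _ _
    _ ≤ _ := by rw [hDcard]; exact Nat.mul_le_mul_right _ hAcard

end Helpers

set_option maxHeartbeats 1000000 in
/-- If `H` has VC dimension (at most) `d` and `|T| ≥ Kd` with `K > 1`,
`K ln 2 > 1 + ln K`, then for all sufficiently small `ε > 0`: the number of
labellings of `T` that are `ε`-close to some `h ∈ H` is at most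
`(e|T|/d)^d (e/ε)^{ε|T|}`, and a uniformly random labelling of `T` is `ε`-far from
every `h ∈ H` except with probability at most `e^{−Ld}` for some constant `L > 0`. -/
theorem random_labelling_far (K : ℝ) (hK : 1 < K) (hKln : 1 + Real.log K < K * Real.log 2) :
    ∃ L > (0 : ℝ), ∃ ε₀ > (0 : ℝ), ∀ ε : ℝ, 0 < ε → ε < ε₀ →
      ∀ (X : Type) (H : Set (X → Bool)) (d : ℕ), 0 < d →
        (∀ T' : Finset X, Shatters H T' → T'.card ≤ d) →
        ∀ T : Finset X, K * d ≤ (T.card : ℝ) →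
          ((Set.ncard {ℓ : (↥T) → Bool | ∃ h ∈ H,
              ((T.attach.filter (fun x => h x.1 ≠ ℓ x)).card : ℝ) ≤ ε * T.card} : ℝ)
            ≤ (Real.exp 1 * T.card / d) ^ (d : ℕ) *
              (Real.exp 1 / ε) ^ (ε * T.card)) ∧
          ((Set.ncard {ℓ : (↥T) → Bool | ¬ ∀ h ∈ H,
              ε * T.card < ((T.attach.filter (fun x => h x.1 ≠ ℓ x)).card : ℝ)} : ℝ)
            ≤ Real.exp (-(L * d)) * 2 ^ T.card) := by
  have hK0 : (0:ℝ) < K := lt_trans one_pos hK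
  set c : ℝ := K * Real.log 2 - 1 - Real.log K with hc
  have hc0 : 0 < c := by rw [hc]; linarith
  refine ⟨c/2, by positivity, min (1/2) ((c/(6*K))^2), by positivity, ?_⟩
  intro ε hε hεlt X H d hd hVC T hT
  have hε12 : ε < 1/2 := lt_of_lt_of_le hεlt (min_le_left _ _)
  have hεsq : ε < (c/(6*K))^2 := lt_of_lt_of_le hεlt (min_le_right _ _)
  have hε1 : ε ≤ 1 := by linarith
  have hd' : (1:ℝ) ≤ (d:ℝ) := by exact_mod_cast hd
  have hd0 : (0:ℝ) < (d:ℝ) := by linarith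
  have hM : (0:ℝ) < (T.card:ℝ) := by nlinarith
  have hdm : d ≤ T.card := by
    have : (d:ℝ) ≤ (T.card:ℝ) := by nlinarith
    exact_mod_cast this
  set j := Nat.floor (ε * T.card) with hj
  -- the two sets coincide, and equal the `Nat`-level set
  have hsetA : {ℓ : (↥T) → Bool | ∃ h ∈ H,
        ((T.attach.filter (fun x => h x.1 ≠ ℓ x)).card : ℝ) ≤ ε * T.card} =
      {ℓ : (↥T) → Bool | ∃ h ∈ H, (T.attach.filter (fun x => h x.1 ≠ ℓ x)).card ≤ j} := by
    ext ℓ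
    simp only [Set.mem_setOf_eq]
    refine exists_congr fun h => and_congr_right fun _ => ?_
    exact (Nat.le_floor_iff (by positivity)).symm
  have hsetB : {ℓ : (↥T) → Bool | ¬ ∀ h ∈ H,
        ε * T.card < ((T.attach.filter (fun x => h x.1 ≠ ℓ x)).card : ℝ)} =
      {ℓ : (↥T) → Bool | ∃ h ∈ H,
        ((T.attach.filter (fun x => h x.1 ≠ ℓ x)).card : ℝ) ≤ ε * T.card} := by
    ext ℓ
    simp only [Set.mem_setOf_eq, not_forall, not_lt, exists_prop]
  -- part (a)
  have key := count_le X H d hVC T j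
  have hb1 := sum_choose_le_pow T.card d hd hdm
  have hb2 := sum_choose_le_rpow T.card ε hε hε1
  have partA : (Set.ncard {ℓ : (↥T) → Bool | ∃ h ∈ H,
      ((T.attach.filter (fun x => h x.1 ≠ ℓ x)).card : ℝ) ≤ ε * T.card} : ℝ)
      ≤ (Real.exp 1 * T.card / d) ^ (d : ℕ) * (Real.exp 1 / ε) ^ (ε * T.card) := by
    rw [hsetA]
    calc (Set.ncard {ℓ : (↥T) → Bool | ∃ h ∈ H,
          (T.attach.filter (fun x => h x.1 ≠ ℓ x)).card ≤ j} : ℝ)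
        ≤ ((∑ k ∈ Finset.Iic d, T.card.choose k : ℕ) : ℝ) *
            ((∑ k ∈ Finset.Iic j, T.card.choose k : ℕ) : ℝ) := by
          exact_mod_cast key
      _ ≤ (Real.exp 1 * T.card / d) ^ (d : ℕ) * (Real.exp 1 / ε) ^ (ε * T.card) := by
          rw [hj] at *
          exact mul_le_mul hb1 hb2 (by positivity) (by positivity)
  refine ⟨partA, ?_⟩
  -- part (b): analytic bound
  rw [hsetB]
  refine partA.trans ?_
  -- abbreviations
  set M : ℝ := (T.card : ℝ) with hMdef
  set D : ℝ := (d : ℝ) with hDdef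
  set t : ℝ := D / M with ht
  have ht0 : 0 < t := by positivity
  have htK : t ≤ 1/K := by
    rw [ht, div_le_div_iff₀ hM hK0]
    linarith [hT]
  have hK1 : 1/K ≤ 1 := by
    rw [div_le_one hK0]; linarith
  have hDt : D = t * M := by rw [ht]; field_simp
  -- rewrite everything as exponentials
  have e1 : (Real.exp 1 * M / D) ^ (d : ℕ) = Real.exp ((1 - Real.log t) * D) := by
    rw [← Real.rpow_natCast (Real.exp 1 * M / D) d,
      Real.rpow_def_of_pos (div_pos (mul_pos (Real.exp_pos 1) hM) hd0), ← Real.exp_log (show (0:ℝ) < M by exact hM)]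
    congr 1
    rw [Real.exp_log hM]
    have : Real.log (Real.exp 1 * M / D) = 1 - Real.log t := by
      rw [Real.log_div (mul_pos (Real.exp_pos 1) hM).ne' hd0.ne', Real.log_mul (Real.exp_pos 1).ne' hM.ne',
        Real.log_exp, ht, Real.log_div hd0.ne' hM.ne']
      ring
    rw [this]
  have e2 : (Real.exp 1 / ε) ^ (ε * M) = Real.exp ((1 - Real.log ε) * (ε * M)) := by
    rw [Real.rpow_def_of_pos (by positivity)]
    congr 1
    rw [Real.log_div (Real.exp_pos 1).ne' hε.ne', Real.log_exp]
  have e3 : (2:ℝ) ^ T.card = Real.exp (Real.log 2 * M) := by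
    rw [← Real.rpow_natCast (2:ℝ) T.card, Real.rpow_def_of_pos two_pos]
  rw [e1, e2, e3, ← Real.exp_add, ← Real.exp_add]
  rw [Real.exp_le_exp]
  -- the key exponent inequality
  have hsqrt : Real.sqrt ε ≤ c / (6*K) := by
    have h1 : Real.sqrt ε ≤ Real.sqrt ((c/(6*K))^2) := Real.sqrt_le_sqrt hεsq.le
    rwa [Real.sqrt_sq (by positivity)] at h1
  have p1 : t * (1 - Real.log t) ≤ (1/K) * (1 + Real.log K) := by
    have := phi_mono ht0 htK hK1
    rwa [Real.log_div one_ne_zero hK0.ne', Real.log_one, zero_sub, sub_neg_eq_add] at this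
  have p2 : ε * (1 - Real.log ε) ≤ c / (2*K) := by
    refine (eps_bound hε).trans ?_
    calc 3 * Real.sqrt ε ≤ 3 * (c/(6*K)) := by linarith
      _ = c / (2*K) := by field_simp; ring
  have p3 : (c/2) * t ≤ (c/2) * (1/K) := by
    exact mul_le_mul_of_nonneg_left htK (by positivity)
  have hsum : t * (1 - Real.log t) + ε * (1 - Real.log ε) + (c/2) * t ≤ Real.log 2 := by
    have hq : (1/K) * (1 + Real.log K) + c/(2*K) + (c/2)*(1/K) = Real.log 2 := by
      rw [hc]; field_simp; ring
    linarith
  have hmul := mul_le_mul_of_nonneg_left hsum hM.le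
  have hexp1 : (1 - Real.log t) * D = M * (t * (1 - Real.log t)) := by rw [hDt]; ring
  have hexp2 : (1 - Real.log ε) * (ε * M) = M * (ε * (1 - Real.log ε)) := by ring
  have hexp3 : (c/2) * D = M * ((c/2) * t) := by rw [hDt]; ring
  have hDD : (c/2) * (d:ℝ) = (c/2) * D := by rw [hDdef]
  nlinarith [hmul, hexp1, hexp2, hexp3]
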